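/- Let π : Σ* → G be a choice of generators for a group G and let # be a letter not in Σ. Suppose R ⊆ Σ* is a regular combing closed under taking formal inverses such that for every a ∈ Σ ∪ {ε} the relation ρ_a = {(u, w) : u, w ∈ R, π(u)π(a) = π(w)} is a rational transduction. Then for every a ∈ Σ ∪ {ε} the column C(π(a)) = {u#w : u, w ∈ R, π(u)π(a)π(w) = 1} is a context-free language over Σ ∪ {#}. -/

import Mathlib

/-- The image in `G` of a word over the generating alphabet, for the monoid homomorphism
`Σ* → G` determined by the letter map `φ`. -/
def wordProd {S G : Type} [Group G] (φ : S → G) (w : List S) : G :=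
  (w.map φ).prod

/-- The word metric `d(g,h) = min {|w| : π(w) = g⁻¹h}` on `G`. -/
noncomputable def wdist {S G : Type} [Group G] (φ : S → G) (g h : G) : ℕ :=
  sInf {n : ℕ | ∃ w : List S, wordProd φ w = g⁻¹ * h ∧ w.length = n}

/-- The set of points of the path determined by the word `w` based at `g`. -/
def pathPoints {S G : Type} [Group G] (φ : S → G) (g : G) (w : List S) : Set G :=
  {x | ∃ i ≤ w.length, x = g * wordProd φ (w.take i)}

/-- A combing: a language projecting onto `G`. -/
def IsCombing {S G : Type} [Group G] (φ : S → G) (R : Language S) : Prop :=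
  ∀ g : G, ∃ w ∈ R, wordProd φ w = g

/-- The word `u#v#w` over `Σ ∪ {#}`, where the letter `#` is modelled by `none`. -/
def hashWord {S : Type} (u v w : List S) : List (Option S) :=
  u.map some ++ [none] ++ v.map some ++ [none] ++ w.map some

/-- The multiplication table `{u#v#w : u,v,w ∈ R, π(u)π(v)π(w) = 1}` determined by
the combing `R`. -/
def multTable {S G : Type} [Group G] (φ : S → G) (R : Language S) : Language (Option S) :=
  {z | ∃ u ∈ R, ∃ v ∈ R, ∃ w ∈ R,
    wordProd φ u * wordProd φ v * wordProd φ w = 1 ∧ z = hashWord u v w}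

/-- The formal inverse `(a₁⋯aₙ)⁻¹ = aₙ⁻¹⋯a₁⁻¹` of a word, for an involution `inv` on
the alphabet. -/
def wordInv {S : Type} (inv : S → S) (w : List S) : List S :=
  (w.map inv).reverse

/-- A relation `ρ ⊆ Σ* × Δ*` is a rational transduction if, in the sense of Nivat's
characterization, there are a finite alphabet `Γ`, a regular language `L ⊆ Γ*` and monoid
homomorphisms `Γ* → Σ*`, `Γ* → Δ*` (determined by letter maps `f`, `g`) such that
`ρ = {(f(t), g(t)) : t ∈ L}`. -/
def IsRatTransduction {S D : Type} (ρ : Set (List S × List D)) : Prop :=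
  ∃ (Γ : Type) (_ : Fintype Γ) (L : Language Γ) (f : Γ → List S) (g : Γ → List D),
    L.IsRegular ∧
      ρ = {p | ∃ t ∈ L, p.1 = (t.map f).flatten ∧ p.2 = (t.map g).flatten}

/-- The image in `G` of an element of `Σ ∪ {ε}`, where the empty word `ε` is `none`. -/
def optProd {S G : Type} [Group G] (φ : S → G) (a : Option S) : G :=
  a.elim 1 φ

/-- The column `C_R(π(a)) = {u#w : u, w ∈ R, π(u)π(a)π(w) = 1}` of the multiplication
table, a language over `Σ ∪ {#}` with `# = none`. -/
def column {S G : Type} [Group G] (φ : S → G) (R : Language S) (a : Option S) :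
    Language (Option S) :=
  {z | ∃ u ∈ R, ∃ w ∈ R, wordProd φ u * optProd φ a * wordProd φ w = 1 ∧
    z = u.map some ++ [none] ++ w.map some}

/-- The relation `ρ_a = {(u, w) : u, w ∈ R, π(u)π(a) = π(w)}`. -/
def rhoRel {S G : Type} [Group G] (φ : S → G) (R : Language S) (a : Option S) :
    Set (List S × List S) :=
  {p | p.1 ∈ R ∧ p.2 ∈ R ∧ wordProd φ p.1 * optProd φ a = wordProd φ p.2}


section GrammarAux


open ContextFreeGrammar

variable {T : Type}

lemma derives_of_terminal {g : ContextFreeGrammar.{0} T} {y : List T} {v : List (Symbol T g.NT)}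
    (h : g.Derives (y.map Symbol.terminal) v) : v = y.map Symbol.terminal := by
  rcases h.eq_or_head with rfl | ⟨w, ⟨r, _, hrw⟩, _⟩
  · rfl
  · exfalso
    obtain ⟨p, q, hpq, -⟩ := hrw.exists_parts
    have : Symbol.nonterminal r.input ∈ y.map (Symbol.terminal : T → Symbol T g.NT) := by
      rw [hpq]; simp
    simp at this

lemma nt_decomp {N : Type} (p : List T) (p' : List (Symbol T N)) {q i : N} {s : List T}
    {q' : List (Symbol T N)}
    (h : p.map Symbol.terminal ++ [Symbol.nonterminal q] ++ s.map Symbol.terminal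
       = p' ++ [Symbol.nonterminal i] ++ q') :
    p' = p.map Symbol.terminal ∧ i = q ∧ q' = s.map Symbol.terminal := by
  induction p generalizing p' with
  | nil =>
    cases p' with
    | nil => simp_all
    | cons x p'' =>
      exfalso
      simp only [List.map_nil, List.nil_append, List.cons_append, List.cons.injEq] at h
      have : Symbol.nonterminal i ∈ s.map (Symbol.terminal : T → Symbol T N) := by
        rw [h.2]; simp
      simp at this
  | cons a p₂ ih =>
    cases p' with
    | nil =>
      simp only [List.map_cons, List.cons_append, List.nil_append, List.cons.injEq] at h
      exact absurd h.1 (by simp)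
    | cons x p₂' =>
      simp only [List.map_cons, List.cons_append, List.cons.injEq] at h
      obtain ⟨rfl, h⟩ := h
      obtain ⟨h1, h2, h3⟩ := ih p₂' (by simpa using h)
      simp [h1, h2, h3]

lemma linear_cf {Γ σ : Type} [Fintype Γ] [Fintype σ] (M : DFA Γ σ)
    (fw gw : Γ → List T) (mid : T) :
    Language.IsContextFree
      {x : List T | ∃ t, t ∈ M.accepts ∧
        x = (t.map fw).flatten ++ [mid] ++ ((t.map gw).reverse).flatten} := by
  classical
  set stepRule : σ × Γ → ContextFreeRule T σ := fun qc =>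
    ⟨qc.1, (fw qc.2).map Symbol.terminal ++ [Symbol.nonterminal (M.step qc.1 qc.2)]
      ++ (gw qc.2).map Symbol.terminal⟩ with hstepRule
  set accRule : σ → ContextFreeRule T σ := fun q => ⟨q, [Symbol.terminal mid]⟩ with haccRule
  set g : ContextFreeGrammar.{0} T := ⟨σ, M.start,
    Finset.univ.image stepRule ∪ (Finset.univ.filter (· ∈ M.accept)).image accRule⟩ with hg
  have hstep_mem : ∀ (q : σ) (c : Γ), stepRule (q, c) ∈ g.rules := by
    intro q c
    exact Finset.mem_union_left _ (Finset.mem_image_of_mem _ (Finset.mem_univ _))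
  have hacc_mem : ∀ q : σ, q ∈ M.accept → accRule q ∈ g.rules := by
    intro q hq
    exact Finset.mem_union_right _
      (Finset.mem_image_of_mem _ (Finset.mem_filter.mpr ⟨Finset.mem_univ _, hq⟩))
  -- completeness
  have compl : ∀ (t : List Γ) (q : σ), M.evalFrom q t ∈ M.accept →
      g.Derives [Symbol.nonterminal q]
        (((t.map fw).flatten ++ [mid] ++ ((t.map gw).reverse).flatten).map Symbol.terminal) := by
    intro t
    induction t with
    | nil =>
      intro q hq
      refine ContextFreeGrammar.Produces.single ⟨accRule q, hacc_mem q hq, ?_⟩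
      simpa [haccRule] using (ContextFreeRule.Rewrites.input_output (r := accRule q))
    | cons c t' ih =>
      intro q hq
      have h1 : g.Produces [Symbol.nonterminal q]
          ((fw c).map Symbol.terminal ++ [Symbol.nonterminal (M.step q c)]
            ++ (gw c).map Symbol.terminal) := by
        refine ⟨stepRule (q, c), hstep_mem q c, ?_⟩
        simpa [hstepRule] using (ContextFreeRule.Rewrites.input_output (r := stepRule (q, c)))
      refine h1.trans_derives ?_
      have h2 := ih (M.step q c) (by simpa [DFA.evalFrom] using hq)
      have h3 := (h2.append_left ((fw c).map Symbol.terminal)).append_right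
        ((gw c).map Symbol.terminal)
      have heq : (((c :: t').map fw).flatten ++ [mid]
            ++ (((c :: t').map gw).reverse).flatten).map Symbol.terminal
          = (fw c).map Symbol.terminal
            ++ ((t'.map fw).flatten ++ [mid] ++ ((t'.map gw).reverse).flatten).map
              (Symbol.terminal : T → Symbol T σ)
            ++ (gw c).map Symbol.terminal := by
        simp [List.map_append]
      rw [heq]
      exact h3
  -- soundness
  have sound : ∀ (x : List T) (u : List (Symbol T σ)), g.Derives u (x.map Symbol.terminal) →
      ∀ (p : List T) (q : σ) (s : List T),
        u = p.map Symbol.terminal ++ [Symbol.nonterminal q] ++ s.map Symbol.terminal →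
        ∃ t, M.evalFrom q t ∈ M.accept ∧
          x = p ++ ((t.map fw).flatten ++ [mid] ++ ((t.map gw).reverse).flatten) ++ s := by
    intro x u hd
    induction hd using Relation.ReflTransGen.head_induction_on with
    | refl =>
      intro p q s hu
      exfalso
      have : Symbol.nonterminal q ∈ x.map (Symbol.terminal : T → Symbol T σ) := by
        rw [hu]; simp
      simp at this
    | head hp hd ih =>
      intro p q s hu
      obtain ⟨r, hr, hrw⟩ := hp
      obtain ⟨p', q', hu', hw⟩ := hrw.exists_parts
      rw [hu] at hu'
      obtain ⟨hp'', hi, hq''⟩ := nt_decomp p p' hu'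
      rw [Finset.mem_union] at hr
      rcases hr with hr | hr
      · rw [Finset.mem_image] at hr
        obtain ⟨⟨q₀, c⟩, -, rfl⟩ := hr
        have hq₀ : q₀ = q := hi
        subst hq₀
        obtain ⟨t', ht'acc, ht'x⟩ := ih (p ++ fw c) (M.step q₀ c) (gw c ++ s)
          (by rw [hw, hp'', hq'']; simp [hstepRule, List.map_append])
        refine ⟨c :: t', by simpa [DFA.evalFrom] using ht'acc, ?_⟩
        rw [ht'x]
        simp [List.append_assoc]
      · rw [Finset.mem_image] at hr
        obtain ⟨q₀, hq₀mem, rfl⟩ := hr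
        have hq₀ : q₀ = q := hi
        subst hq₀
        rw [Finset.mem_filter] at hq₀mem
        have hw' : (p ++ [mid] ++ s).map Symbol.terminal
            = p' ++ (accRule q₀).output ++ q' := by
          rw [hp'', hq'']; simp [haccRule, List.map_append]
        have hd2 : g.Derives ((p ++ [mid] ++ s).map Symbol.terminal)
            (x.map Symbol.terminal) := by rw [hw', ← hw]; exact hd
        have hx : x.map (Symbol.terminal : T → Symbol T σ)
            = (p ++ [mid] ++ s).map Symbol.terminal := derives_of_terminal hd2
        have hxx : x = p ++ [mid] ++ s := by
          have hinj : Function.Injective (Symbol.terminal : T → Symbol T σ) := by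
            intro a b hab; injection hab
          exact List.map_injective_iff.mpr hinj hx
        exact ⟨[], by simpa [DFA.evalFrom] using hq₀mem.2, by simp [hxx]⟩
  refine ⟨g, ?_⟩
  ext x
  constructor
  · intro hx
    obtain ⟨t, ht, hxeq⟩ := sound x _ hx [] M.start [] (by simp [hg]; rfl)
    exact ⟨t, ht, by simpa using hxeq⟩
  · rintro ⟨t, ht, rfl⟩
    exact compl t M.start ht

end GrammarAux

section WordAux

variable {S S' G : Type} [Group G]

lemma wordProd_append (φ : S → G) (u v : List S) :
    wordProd φ (u ++ v) = wordProd φ u * wordProd φ v := by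
  simp [wordProd]

lemma wordInv_append (inv : S → S) (u v : List S) :
    wordInv inv (u ++ v) = wordInv inv v ++ wordInv inv u := by
  simp [wordInv]

lemma wordInv_wordInv {inv : S → S} (hinv_inv : ∀ a, inv (inv a) = a) (w : List S) :
    wordInv inv (wordInv inv w) = w := by
  have h : inv ∘ inv = id := funext hinv_inv
  simp [wordInv, List.map_reverse, List.map_map, h]

lemma wordProd_wordInv {inv : S → S} {φ : S → G} (hφinv : ∀ a, φ (inv a) = (φ a)⁻¹)
    (w : List S) : wordProd φ (wordInv inv w) = (wordProd φ w)⁻¹ := by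
  induction w with
  | nil => simp [wordProd, wordInv]
  | cons a w ih =>
    have h1 : wordInv inv (a :: w) = wordInv inv w ++ [inv a] := by simp [wordInv]
    rw [h1, wordProd_append, ih]
    simp [wordProd, hφinv, mul_inv_rev]

lemma map_some_flatten {T : Type} (h : S → T) (l : List (List S)) :
    (l.flatten).map h = (l.map (List.map h)).flatten := by
  induction l with
  | nil => rfl
  | cons x l ih => simp [ih]

lemma inv_side {T : Type} (inv : S → S) (h : S → T) (gg : S' → List S) :
    ∀ t : List S', (wordInv inv ((t.map gg).flatten)).map h
      = ((t.map (fun c => (wordInv inv (gg c)).map h)).reverse).flatten := by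
  intro t
  induction t with
  | nil => simp [wordInv]
  | cons c t ih =>
    simp only [List.map_cons, List.flatten_cons, wordInv_append, List.map_append,
      List.reverse_cons, List.flatten_append, ih]
    simp

end WordAux

/-- If `R` is a regular combing closed under formal inverses such that
each `ρ_a` is a rational transduction, then each column `C(π(a))` is context-free. -/
theorem columns_contextFree_of_asynchronouslyAutomatic {S G : Type} [Fintype S] [Group G]
    (inv : S → S) (hinv_inv : ∀ a, inv (inv a) = a) (hinv_ne : ∀ a, inv a ≠ a)
    (φ : S → G) (hsurj : Function.Surjective (wordProd φ))
    (hφinv : ∀ a, φ (inv a) = (φ a)⁻¹)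
    (R : Language S) (hreg : R.IsRegular) (hcomb : IsCombing φ R)
    (hclosed : ∀ w ∈ R, wordInv inv w ∈ R)
    (hrat : ∀ a : Option S, IsRatTransduction (rhoRel φ R a)) :
    ∀ a : Option S, (column φ R a).IsContextFree := by
  intro a
  obtain ⟨Γ, hΓ, L, f, gg, hLreg, hρ⟩ := hrat a
  obtain ⟨σ, hσ, M, hM⟩ := hLreg
  haveI := hΓ
  haveI := hσ
  have key : column φ R a = {x : List (Option S) | ∃ t, t ∈ M.accepts ∧
      x = (t.map (fun c => (f c).map some)).flatten ++ [(none : Option S)]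
        ++ ((t.map (fun c => (wordInv inv (gg c)).map some)).reverse).flatten} := by
    ext z
    constructor
    · rintro ⟨u, hu, w, hw, hprod, rfl⟩
      have hmem : (u, wordInv inv w) ∈ rhoRel φ R a := by
        refine ⟨hu, hclosed w hw, ?_⟩
        rw [wordProd_wordInv hφinv]
        exact eq_inv_of_mul_eq_one_left hprod
      rw [hρ] at hmem
      obtain ⟨t, ht, h1, h2⟩ := hmem
      refine ⟨t, by rwa [hM], ?_⟩
      have hw2 : w = wordInv inv ((t.map gg).flatten) := by
        rw [← h2]; exact (wordInv_wordInv hinv_inv w).symm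
      simp only at h1
      rw [h1, hw2, map_some_flatten, inv_side]
      simp only [List.map_map]
      rfl
    · rintro ⟨t, ht, rfl⟩
      have hmem : ((t.map f).flatten, (t.map gg).flatten) ∈ rhoRel φ R a := by
        rw [hρ]; exact ⟨t, by rwa [hM] at ht, rfl, rfl⟩
      obtain ⟨hu, hv, hprod⟩ := hmem
      refine ⟨(t.map f).flatten, hu, wordInv inv ((t.map gg).flatten), hclosed _ hv, ?_, ?_⟩
      · rw [wordProd_wordInv hφinv, hprod]
        group
      · rw [map_some_flatten, inv_side]
        simp only [List.map_map]
        rfl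
  rw [key]
  exact linear_cf M _ _ none
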